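/- For every prime p, there exists an index n such that p divides a(n), where a is the Yellowstone sequence. -/

import Mathlib

/-- The Yellowstone sequence: a 1 = 1, a 2 = 2, a 3 = 3, and for n ≥ 4,
`a n` is the least positive integer not among `a 1, …, a (n-1)` which shares
a common factor with `a (n-2)` and is coprime to `a (n-1)`. -/
def IsYellowstone (a : ℕ → ℕ) : Prop :=
  a 1 = 1 ∧ a 2 = 2 ∧ a 3 = 3 ∧
  ∀ n, 4 ≤ n →
    IsLeast {k : ℕ | 0 < k ∧ (∀ m, 1 ≤ m → m < n → a m ≠ k) ∧
      1 < Nat.gcd k (a (n - 2)) ∧ Nat.gcd k (a (n - 1)) = 1} (a n)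

namespace YSAux

variable {a : ℕ → ℕ}

lemma ys_pos (ha : IsYellowstone a) : ∀ n, 1 ≤ n → 0 < a n := by
  obtain ⟨h1, h2, h3, hr⟩ := ha
  intro n hn
  rcases lt_or_ge n 4 with h | h
  · interval_cases n <;> simp [h1, h2, h3]
  · exact (hr n h).1.1

lemma ys_ne (ha : IsYellowstone a) : ∀ m n, 1 ≤ m → m < n → a m ≠ a n := by
  obtain ⟨h1, h2, h3, hr⟩ := ha
  intro m n hm hmn
  rcases lt_or_ge n 4 with h | h
  · interval_cases n <;> interval_cases m <;> simp [h1, h2, h3]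
  · exact fun he => (hr n h).1.2.1 m hm hmn he

lemma ys_cop (ha : IsYellowstone a) : ∀ n, 2 ≤ n → Nat.gcd (a (n + 1)) (a n) = 1 := by
  obtain ⟨h1, h2, h3, hr⟩ := ha
  intro n hn
  rcases eq_or_lt_of_le hn with h | h
  · rw [← h]; simp [h2, h3]
  · have := (hr (n + 1) (by omega)).1.2.2.2
    simpa using this

lemma ys_le_cand (ha : IsYellowstone a) {n k : ℕ} (hn : 4 ≤ n) (hk : 0 < k)
    (hnew : ∀ m, 1 ≤ m → m < n → a m ≠ k)
    (hg2 : 1 < Nat.gcd k (a (n - 2))) (hg1 : Nat.gcd k (a (n - 1)) = 1) : a n ≤ k :=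
  (ha.2.2.2 n hn).2 ⟨hk, hnew, hg2, hg1⟩

lemma ys_event (ha : IsYellowstone a) (B : ℕ) : ∃ N, ∀ n, N ≤ n → B < a n := by
  have hfin : {n | 1 ≤ n ∧ a n ≤ B}.Finite := by
    apply Set.Finite.of_finite_image (f := a)
    · apply (Set.finite_Icc 1 B).subset
      rintro _ ⟨n, ⟨hn, hB⟩, rfl⟩
      exact ⟨ys_pos ha n hn, hB⟩
    · intro x hx y hy hxy
      by_contra hne
      rcases lt_or_gt_of_ne hne with h | h
      · exact ys_ne ha x y hx.1 h hxy
      · exact ys_ne ha y x hy.1 h hxy.symm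
  obtain ⟨N, hN⟩ := hfin.bddAbove
  refine ⟨N + 1, fun n hn => ?_⟩
  by_contra hB
  push_neg at hB
  have hmem : n ∈ {n | 1 ≤ n ∧ a n ≤ B} := ⟨by omega, hB⟩
  have := hN hmem
  omega

lemma ys_dich (ha : IsYellowstone a) {N E n : ℕ} (hN : 4 ≤ N)
    (hodd : ∀ m, N ≤ m → ¬ 2 ∣ a m) (hE : ∀ m, m < N → a m ≤ E)
    (hn : N + 2 ≤ n) : a n ≤ 2 * E ∨ ((a n).Prime ∧ a n ∣ a (n - 2)) := by
  have hn4 : 4 ≤ n := by omega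
  have hpos2 : 0 < a (n - 2) := ys_pos ha _ (by omega)
  have h2big : 1 < a (n - 2) := by
    have hg := (ha.2.2.2 (n - 2) (by omega)).1.2.2.1
    have := Nat.gcd_le_left (a (n - 2 - 2)) hpos2
    omega
  set r := (a (n - 2)).minFac with hrdef
  have hrp : r.Prime := Nat.minFac_prime (by omega)
  have hrd : r ∣ a (n - 2) := Nat.minFac_dvd _
  have hodd2 : ¬ 2 ∣ a (n - 2) := hodd (n - 2) (by omega)
  have hodd1 : ¬ 2 ∣ a (n - 1) := hodd (n - 1) (by omega)
  have hoddn : ¬ 2 ∣ a n := hodd n (by omega)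
  have hr2 : r ≠ 2 := fun h => hodd2 (h ▸ hrd)
  have hcop : Nat.gcd (a (n - 1)) (a (n - 2)) = 1 := by
    have := ys_cop ha (n - 2) (by omega)
    have he : n - 2 + 1 = n - 1 := by omega
    rwa [he] at this
  have hrnd : ¬ r ∣ a (n - 1) := by
    intro hd
    have hdg : r ∣ Nat.gcd (a (n - 1)) (a (n - 2)) := Nat.dvd_gcd hd hrd
    rw [hcop] at hdg
    have := Nat.le_of_dvd one_pos hdg
    have := hrp.two_le
    omega
  have cand : ∀ j, 1 ≤ j → E < 2 ^ j * r → a n ≤ 2 ^ j * r := by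
    intro j hj hEj
    have heven : 2 ∣ 2 ^ j * r := Dvd.dvd.mul_right (dvd_pow_self 2 (by omega)) r
    apply ys_le_cand ha hn4
    · exact Nat.mul_pos (pow_pos (by norm_num) j) hrp.pos
    · intro m hm hmn he
      rcases lt_or_ge m N with h | h
      · have := hE m h; omega
      · exact hodd m h (he ▸ heven)
    · have hrg : r ∣ Nat.gcd (2 ^ j * r) (a (n - 2)) :=
        Nat.dvd_gcd (dvd_mul_left r (2 ^ j)) hrd
      have hgpos : 0 < Nat.gcd (2 ^ j * r) (a (n - 2)) :=
        Nat.gcd_pos_of_pos_right _ hpos2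
      have := Nat.le_of_dvd hgpos hrg
      have := hrp.two_le
      omega
    · have c2 : Nat.Coprime (2 ^ j) (a (n - 1)) :=
        Nat.Coprime.pow_left j ((Nat.prime_two.coprime_iff_not_dvd).mpr hodd1)
      have cr : Nat.Coprime r (a (n - 1)) := (hrp.coprime_iff_not_dvd).mpr hrnd
      exact Nat.Coprime.mul c2 cr
  by_cases hEr : E < 2 * r
  · right
    have hle : a n ≤ 2 * r := by
      have := cand 1 le_rfl (by omega)
      simpa using this
    have hne : a n ≠ 2 * r := fun h => hoddn (h ▸ ⟨r, rfl⟩)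
    have hlt : a n < 2 * r := lt_of_le_of_ne hle hne
    have hg : 1 < Nat.gcd (a n) (a (n - 2)) := (ha.2.2.2 n hn4).1.2.2.1
    set s := (Nat.gcd (a n) (a (n - 2))).minFac with hsdef
    have hsp : s.Prime := Nat.minFac_prime (by omega)
    have hs1 : s ∣ a n := (Nat.minFac_dvd _).trans (Nat.gcd_dvd_left _ _)
    have hs2 : s ∣ a (n - 2) := (Nat.minFac_dvd _).trans (Nat.gcd_dvd_right _ _)
    have hrs : r ≤ s := Nat.minFac_le_of_dvd hsp.two_le hs2
    obtain ⟨t, ht⟩ := hs1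
    have hposn : 0 < a n := ys_pos ha n (by omega)
    have ht1 : t = 1 := by
      rcases t with _ | _ | t
      · omega
      · rfl
      · exfalso
        have h2s : s * 2 ≤ s * (t + 2) := Nat.mul_le_mul_left s (by omega)
        have h2r : 2 * r ≤ a n := by
          rw [ht]
          calc 2 * r ≤ s * 2 := by omega
          _ ≤ s * (t + 2) := h2s
        omega
    have han : a n = s := by rw [ht, ht1, mul_one]
    exact ⟨han ▸ hsp, han ▸ hs2⟩
  · left
    push_neg at hEr
    have hex : ∃ j, E < 2 ^ j * r := by
      refine ⟨E + 1, ?_⟩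
      have h1 : E < 2 ^ (E + 1) := (Nat.lt_two_pow_self (n := E)).trans_le (Nat.pow_le_pow_right (by norm_num) (by omega))
      have h2 : 2 ^ (E + 1) ≤ 2 ^ (E + 1) * r := Nat.le_mul_of_pos_right _ hrp.pos
      omega
    set j := Nat.find hex with hjdef
    have hj : E < 2 ^ j * r := Nat.find_spec hex
    have hj0 : j ≠ 0 := by
      intro h
      rw [h, pow_zero, one_mul] at hj
      omega
    have hj1 : ¬ E < 2 ^ (j - 1) * r := Nat.find_min hex (by omega)
    push_neg at hj1
    have hpow : 2 ^ j = 2 * 2 ^ (j - 1) := by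
      rw [← pow_succ']
      congr 1
      omega
    have hle2E : 2 ^ j * r ≤ 2 * E := by
      rw [hpow, mul_assoc]
      omega
    exact (cand j (by omega) hj).trans hle2E

lemma ys_evens (ha : IsYellowstone a) (M : ℕ) : ∃ n, M ≤ n ∧ 2 ∣ a n := by
  by_contra h
  push_neg at h
  set N := max M 4 with hNdef
  have hN4 : 4 ≤ N := le_max_right M 4
  have hodd : ∀ m, N ≤ m → ¬ 2 ∣ a m := fun m hm =>
    h m (le_trans (le_max_left M 4) hm)
  set E := (Finset.range N).sup a with hEdef
  have hE : ∀ m, m < N → a m ≤ E := fun m hm => Finset.le_sup (Finset.mem_range.mpr hm)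
  obtain ⟨N₂, hN₂⟩ := ys_event ha (2 * E)
  set n := max N₂ (N + 2) + 2 with hndef
  have hnN : N + 2 ≤ n - 2 := by
    have := le_max_right N₂ (N + 2)
    omega
  have hnN₂ : N₂ ≤ n - 2 := by
    have := le_max_left N₂ (N + 2)
    omega
  have hd1 := ys_dich ha hN4 hodd hE (n := n) (by omega)
  have hd2 := ys_dich ha hN4 hodd hE (n := n - 2) hnN
  have hbig1 : 2 * E < a n := hN₂ n (by omega)
  have hbig2 : 2 * E < a (n - 2) := hN₂ (n - 2) hnN₂
  rcases hd1 with h1 | ⟨hp1, hdvd1⟩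
  · omega
  rcases hd2 with h2 | ⟨hp2, hdvd2⟩
  · omega
  have heq : a n = a (n - 2) := by
    rcases (Nat.Prime.eq_one_or_self_of_dvd hp2 _ hdvd1) with h | h
    · exact absurd h hp1.one_lt.ne'
    · exact h
  exact ys_ne ha (n - 2) n (by omega) (by omega) heq.symm

end YSAux

theorem yellowstone_exists_multiple (a : ℕ → ℕ) (ha : IsYellowstone a)
    (p : ℕ) (hp : p.Prime) : ∃ n, 1 ≤ n ∧ p ∣ a n := by
  by_contra hcon
  push_neg at hcon
  have hcon' : ∀ n, 1 ≤ n → ¬ p ∣ a n := fun n hn => hcon n hn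
  have hp2 : p ≠ 2 := by
    rintro rfl
    exact hcon' 2 one_le_two (by rw [ha.2.1])
  obtain ⟨N₃, hN₃⟩ := YSAux.ys_event ha (2 * p)
  obtain ⟨m, hm, hmdvd⟩ := YSAux.ys_evens ha (max N₃ 4)
  have hm4 : 4 ≤ m := le_trans (le_max_right N₃ 4) hm
  have hmN₃ : N₃ ≤ m := le_trans (le_max_left N₃ 4) hm
  have hcopm : Nat.gcd (a (m + 1)) (a m) = 1 := YSAux.ys_cop ha m (by omega)
  have hoddm1 : ¬ 2 ∣ a (m + 1) := by
    intro hd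
    have : 2 ∣ Nat.gcd (a (m + 1)) (a m) := Nat.dvd_gcd hd hmdvd
    rw [hcopm] at this
    omega
  have hgcd1 : Nat.gcd (2 * p) (a (m + 1)) = 1 :=
    Nat.Coprime.mul ((Nat.prime_two.coprime_iff_not_dvd).mpr hoddm1)
      ((hp.coprime_iff_not_dvd).mpr (hcon' (m + 1) (by omega)))
  have hgcd2 : 1 < Nat.gcd (2 * p) (a m) := by
    have h2d : 2 ∣ Nat.gcd (2 * p) (a m) := Nat.dvd_gcd ⟨p, rfl⟩ hmdvd
    have hpos : 0 < Nat.gcd (2 * p) (a m) :=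
      Nat.gcd_pos_of_pos_right _ (YSAux.ys_pos ha m (by omega))
    omega
  have he2 : m + 2 - 2 = m := by omega
  have he1 : m + 2 - 1 = m + 1 := by omega
  have hle : a (m + 2) ≤ 2 * p := by
    apply YSAux.ys_le_cand ha (by omega : 4 ≤ m + 2)
    · have := hp.pos; omega
    · intro k hk hkn he
      exact hcon' k hk (he ▸ dvd_mul_left p 2)
    · rw [he2]; exact hgcd2
    · rw [he1]; exact hgcd1
  have := hN₃ (m + 2) (by omega)
  omega
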